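/- Let ν ∈ ℝ and let z₂ : ℝ → ℝ be differentiable satisfying z₂' = (ν+1)(z₁+z₂) − (z₁+z₂)³ for a given continuous z₁ : ℝ → ℝ. Then for every μ > 0 there exist constants C_ν > 0 and C_{μ,ν} > 0 (independent of z₁, z₂) such that (1/2) d/dt |z₂(t)|² ≤ −(μ/2)|z₂(t)|² + C_ν (|z₁(t)|² + |z₁(t)|⁴) + C_{μ,ν} for all t. -/

import Mathlib

lemma key_ineq2 (K μ : ℝ) (hμ : 0 < μ) (a s : ℝ) :
    (s - a) * (K * s - s ^ 3) + (μ / 2) * (s - a) ^ 2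
      ≤ (μ + 2) * (a ^ 2 + a ^ 4) + ((K ^ 2 / 2 + μ + 1) ^ 2 + 1) := by
  have h1 : K * (s - a) * s ≤ K ^ 2 / 2 * s ^ 2 + (s - a) ^ 2 / 2 := by
    nlinarith [sq_nonneg (K * s - (s - a))]
  have h3 : a * s ^ 3 ≤ (3 / 4) * s ^ 4 + (1 / 4) * a ^ 4 := by
    nlinarith [sq_nonneg (s ^ 2 - a * s), sq_nonneg (a ^ 2 - s ^ 2)]
  have h4 : (s - a) ^ 2 ≤ 2 * a ^ 2 + 2 * s ^ 2 := by
    nlinarith [sq_nonneg (s + a)]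
  have h5 : (K ^ 2 / 2 + μ + 1) * s ^ 2 - s ^ 4 / 4 ≤ (K ^ 2 / 2 + μ + 1) ^ 2 := by
    nlinarith [sq_nonneg (s ^ 2 - 2 * (K ^ 2 / 2 + μ + 1))]
  have h6 : μ * (s - a) ^ 2 ≤ μ * (2 * a ^ 2 + 2 * s ^ 2) :=
    mul_le_mul_of_nonneg_left h4 (le_of_lt hμ)
  nlinarith [h1, h3, h4, h5, h6, sq_nonneg a, sq_nonneg (a ^ 2),
    mul_nonneg (le_of_lt hμ) (sq_nonneg a), mul_nonneg (le_of_lt hμ) (sq_nonneg (a ^ 2))]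

lemma key_ineq (K μ : ℝ) (hμ : 0 < μ) (a b : ℝ) :
    b * (K * (a + b) - (a + b) ^ 3) + (μ / 2) * b ^ 2
      ≤ (μ + 2) * (a ^ 2 + a ^ 4) + ((K ^ 2 / 2 + μ + 1) ^ 2 + 1) := by
  have := key_ineq2 K μ hμ a (a + b)
  simpa using this

theorem temperedness_differential_inequality (ν μ : ℝ) (hμ : 0 < μ) :
    ∃ Cν > 0, ∃ Cμν > 0,
      ∀ z₁ : ℝ → ℝ, Continuous z₁ →
      ∀ z₂ : ℝ → ℝ, Differentiable ℝ z₂ →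
        (∀ t, deriv z₂ t = (ν + 1) * (z₁ t + z₂ t) - (z₁ t + z₂ t) ^ 3) →
        ∀ t : ℝ,
          (1 / 2) * deriv (fun s => (z₂ s) ^ 2) t
            ≤ -(μ / 2) * (z₂ t) ^ 2 + Cν * ((z₁ t) ^ 2 + (z₁ t) ^ 4) + Cμν := by
  refine ⟨μ + 2, by linarith, ((ν + 1) ^ 2 / 2 + μ + 1) ^ 2 + 1, by positivity, ?_⟩
  intro z₁ _ z₂ hz₂ hode t
  have hd : deriv (fun s => (z₂ s) ^ 2) t = 2 * z₂ t * deriv z₂ t := by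
    have := (((hz₂ t).hasDerivAt.pow 2 : HasDerivAt (fun s => z₂ s ^ 2) _ t)).deriv
    rw [show deriv (fun s => z₂ s ^ 2) t = deriv (z₂ ^ 2) t from rfl]
    simpa [mul_comm, mul_assoc] using this
  rw [hd, hode t]
  have h := key_ineq (ν + 1) μ hμ (z₁ t) (z₂ t)
  linarith [h]
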